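/- Let H be a Hilbert space with a bounded operator M ∈ L(H), realized as a space of functions on Ω with nonsingular reproducing kernel. Let F be an m-dimensional subspace of H, and suppose D ⊆ Ω is a set of uniqueness for H and for the class HH+HH = {f₁f₂ + f₃f₄ : f_j ∈ H}. Suppose (Mh)(λ) = φ(λ)h(λ) for all h ∈ F^⊥ and λ ∈ D, where φ : D → ℂ. Then the set S = {λ ∈ Ω : k_λ ∈ F} contains at most m points, and there exists ψ : Ω∖S → ℂ with ψ = φ on D∖S and (Mh)(λ) = ψ(λ)h(λ) for all λ ∈ Ω∖S and h ∈ F^⊥. -/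

import Mathlib

/-- (Lemma 1.4.) Let `H` be a Hilbert function space on `Ω` with
nonsingular kernel (`kf` linearly independent), `M` a bounded operator, `F` an
`m`-dimensional subspace, and `D` a set of uniqueness for `H` and for the class
`HH+HH`. If `(Mh)(λ) = φ(λ)h(λ)` for all `h ∈ Fᗮ` and `λ ∈ D`, then the set
`S = {λ : k_λ ∈ F}` has at most `m` points, and there is `ψ` agreeing with `φ` on
`D∖S` with `(Mh)(λ) = ψ(λ)h(λ)` for all `λ ∈ Ω∖S` and `h ∈ Fᗮ`. -/
theorem stmt12 {H Ω : Type*} [NormedAddCommGroup H] [InnerProductSpace ℂ H]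
    [CompleteSpace H]
    (ev : H →ₗ[ℂ] (Ω → ℂ)) (hinj : Function.Injective ev)
    (kf : Ω → H)
    (hrep : ∀ (f : H) (l : Ω), (inner ℂ (kf l) f : ℂ) = ev f l)
    (hns : LinearIndependent ℂ kf)
    (M : H →L[ℂ] H) (F : Submodule ℂ H) (m : ℕ)
    [FiniteDimensional ℂ F] (hdim : Module.finrank ℂ F = m)
    (D : Set Ω)
    (huniqH : ∀ h : H, (∀ l ∈ D, ev h l = 0) → h = 0)
    (huniqHH : ∀ f₁ f₂ f₃ f₄ g₁ g₂ g₃ g₄ : H,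
      (∀ l ∈ D, ev f₁ l * ev f₂ l + ev f₃ l * ev f₄ l
              = ev g₁ l * ev g₂ l + ev g₃ l * ev g₄ l) →
      ∀ l : Ω, ev f₁ l * ev f₂ l + ev f₃ l * ev f₄ l
             = ev g₁ l * ev g₂ l + ev g₃ l * ev g₄ l)
    (φ : Ω → ℂ)
    (hM : ∀ h ∈ Fᗮ, ∀ l ∈ D, ev (M h) l = φ l * ev h l) :
    (∀ s : Finset Ω, (↑s ⊆ {l : Ω | kf l ∈ F}) → s.card ≤ m) ∧
    ∃ ψ : Ω → ℂ,
      (∀ l ∈ D, kf l ∉ F → ψ l = φ l) ∧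
      (∀ l : Ω, kf l ∉ F → ∀ h ∈ Fᗮ, ev (M h) l = ψ l * ev h l) := by
  classical
  constructor
  · intro s hs
    have hli : LinearIndependent ℂ (fun x : s => (⟨kf x, hs x.2⟩ : F)) := by
      have : LinearIndependent ℂ (fun x : s => kf x) :=
        hns.comp _ Subtype.val_injective
      exact this.of_comp F.subtype
    have := hli.fintype_card_le_finrank
    simpa [hdim] using this
  · -- key cross identity
    have key : ∀ h₁ ∈ Fᗮ, ∀ h₂ ∈ Fᗮ, ∀ l : Ω,
        ev (M h₁) l * ev h₂ l = ev (M h₂) l * ev h₁ l := by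
      intro h₁ hm1 h₂ hm2 l
      have := huniqHH (M h₁) h₂ 0 0 (M h₂) h₁ 0 0 (fun l hl => by
        simp only [map_zero, Pi.zero_apply, mul_zero, zero_mul, add_zero]
        rw [hM h₁ hm1 l hl, hM h₂ hm2 l hl]; ring) l
      simpa using this
    -- existence of nonvanishing h in Fᗮ for l with kf l ∉ F
    have ex : ∀ l : Ω, kf l ∉ F → ∃ h, h ∈ Fᗮ ∧ ev h l ≠ 0 := by
      intro l hl
      by_contra hcon
      push_neg at hcon
      apply hl
      have : kf l ∈ Fᗮᗮ := by
        intro v hv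
        have h0 : ev v l = 0 := hcon v hv
        have : (inner ℂ (kf l) v : ℂ) = 0 := by rw [hrep]; exact h0
        have := congrArg (starRingEnd ℂ) this
        rwa [inner_conj_symm, map_zero] at this
      rwa [Submodule.orthogonal_orthogonal] at this
    refine ⟨fun l => if hl : ∃ h, h ∈ Fᗮ ∧ ev h l ≠ 0
        then ev (M hl.choose) l / ev hl.choose l else 0, ?_, ?_⟩
    · intro l hlD hlF
      have hex := ex l hlF
      simp only
      rw [dif_pos hex]
      obtain ⟨hmem, hne⟩ := hex.choose_spec
      rw [hM _ hmem l hlD, mul_div_assoc, div_self hne, mul_one]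
    · intro l hlF h hmem
      have hex := ex l hlF
      simp only
      rw [dif_pos hex]
      obtain ⟨hmem0, hne0⟩ := hex.choose_spec
      have hk := key h hmem hex.choose hmem0 l
      field_simp
      linear_combination hk
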